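/- arXiv:math/0201024 — 2 statements merged into one kernel-verified Lean document; each statement's English description precedes it below -/
import Mathlib

section
/- For every n = 0, 1, 2, …, the rational numbers u_n and v_n produced by the recurrence are well defined (i.e., the leading coefficient (2n+1)^2(2n+2)^2 p(n) never vanishes) and satisfy u_n > 0 for all n ≥ 0 and v_n > 0 for all n ≥ 1. -/
open Filter Topology

noncomputable section

/-- `p(x) = 20x² - 8x + 1`. -/
def pp (x : ℚ) : ℚ := 20*x^2 - 8*x + 1

/-- `q(x) = 3520x⁶ + 5632x⁵ + 2064x⁴ - 384x³ - 156x² + 16x + 7`. -/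
def qq (x : ℚ) : ℚ := 3520*x^6 + 5632*x^5 + 2064*x^4 - 384*x^3 - 156*x^2 + 16*x + 7

/-- The sequence `u`: `u₀ = 1`, `u₁ = 7/4`, and for `n ≥ 1`
`(2n+1)²(2n+2)² p(n) u_{n+1} - q(n) u_n - (2n-1)²(2n)² p(n+1) u_{n-1} = 0`
(written here solving for `u_{n+2}` at index `n+1 ≥ 1`). -/
def uSeq : ℕ → ℚ
  | 0 => 1
  | 1 => 7/4
  | n + 2 =>
      (qq ((n : ℚ) + 1) * uSeq (n + 1)
          + (2*(n : ℚ)+1)^2 * (2*(n : ℚ)+2)^2 * pp ((n : ℚ) + 2) * uSeq n)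
        / ((2*(n : ℚ)+3)^2 * (2*(n : ℚ)+4)^2 * pp ((n : ℚ) + 1))

/-- The sequence `v`: `v₀ = 0`, `v₁ = 13/8`, same recurrence as `u`. -/
def vSeq : ℕ → ℚ
  | 0 => 0
  | 1 => 13/8
  | n + 2 =>
      (qq ((n : ℚ) + 1) * vSeq (n + 1)
          + (2*(n : ℚ)+1)^2 * (2*(n : ℚ)+2)^2 * pp ((n : ℚ) + 2) * vSeq n)
        / ((2*(n : ℚ)+3)^2 * (2*(n : ℚ)+4)^2 * pp ((n : ℚ) + 1))

/-- `D n = lcm(1, 2, …, n)` (equal to `1` for `n = 0`). -/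
def D (n : ℕ) : ℕ := (Finset.Icc 1 n).lcm id

/-- Catalan's constant `G = Σ_{l≥0} (-1)^l / (2l+1)²`. -/
def G : ℝ := ∑' l : ℕ, (-1)^l / (2*(l : ℝ)+1)^2

/-- the leading coefficient `(2n+1)²(2n+2)² p(n)` of the recurrence never
vanishes (so `u_n`, `v_n` are well defined), `u_n > 0` for all `n ≥ 0`, and `v_n > 0`
for all `n ≥ 1`. -/
theorem catalan_sequences_wellDefined_and_positive :
    (∀ n : ℕ, 1 ≤ n → (2*(n : ℚ)+1)^2 * (2*(n : ℚ)+2)^2 * pp (n : ℚ) ≠ 0) ∧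
    (∀ n : ℕ, 0 < uSeq n) ∧
    (∀ n : ℕ, 1 ≤ n → 0 < vSeq n) := by
  have hpp : ∀ x : ℚ, 0 ≤ x → 0 < pp x := by
    intro x hx
    unfold pp
    nlinarith [sq_nonneg (10*x - 2)]
  have hqq : ∀ x : ℚ, 1 ≤ x → 0 < qq x := by
    intro x hx
    unfold qq
    nlinarith [pow_le_pow_left₀ (by linarith : (0:ℚ) ≤ 1) hx 3,
      sq_nonneg x, sq_nonneg (x-1), pow_pos (by linarith : (0:ℚ) < x) 6,
      pow_pos (by linarith : (0:ℚ) < x) 5, pow_pos (by linarith : (0:ℚ) < x) 4,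
      pow_pos (by linarith : (0:ℚ) < x) 3]
  have hcoef : ∀ n : ℕ, 0 < (2*(n : ℚ)+3)^2 * (2*(n : ℚ)+4)^2 * pp ((n : ℚ) + 1) := by
    intro n
    have hn : (0:ℚ) ≤ (n:ℚ) := Nat.cast_nonneg n
    have := hpp ((n:ℚ)+1) (by linarith)
    positivity
  have hu : ∀ n : ℕ, 0 < uSeq n ∧ 0 < uSeq (n+1) := by
    intro n
    induction n with
    | zero => exact ⟨by norm_num [uSeq], by norm_num [uSeq]⟩
    | succ k ih =>
      refine ⟨ih.2, ?_⟩
      show 0 < uSeq (k+2)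
      rw [uSeq]
      apply div_pos _ (hcoef k)
      have hn : (0:ℚ) ≤ (k:ℚ) := Nat.cast_nonneg k
      have h1 := hqq ((k:ℚ)+1) (by linarith)
      have h2 := hpp ((k:ℚ)+2) (by linarith)
      have h3 : (0:ℚ) < (2*(k:ℚ)+1)^2 * (2*(k:ℚ)+2)^2 := by positivity
      nlinarith [ih.1, ih.2, mul_pos h1 ih.2, mul_pos (mul_pos h3 h2) ih.1]
  have hv : ∀ n : ℕ, 0 ≤ vSeq n ∧ 0 < vSeq (n+1) := by
    intro n
    induction n with
    | zero => exact ⟨by norm_num [vSeq], by norm_num [vSeq]⟩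
    | succ k ih =>
      refine ⟨ih.2.le, ?_⟩
      show 0 < vSeq (k+2)
      rw [vSeq]
      apply div_pos _ (hcoef k)
      have hn : (0:ℚ) ≤ (k:ℚ) := Nat.cast_nonneg k
      have h1 := hqq ((k:ℚ)+1) (by linarith)
      have h2 := hpp ((k:ℚ)+2) (by linarith)
      have h3 : (0:ℚ) < (2*(k:ℚ)+1)^2 * (2*(k:ℚ)+2)^2 := by positivity
      nlinarith [ih.1, ih.2, mul_pos h1 ih.2,
        mul_nonneg (mul_nonneg h3.le h2.le) ih.1]
  refine ⟨?_, fun n => (hu n).1, ?_⟩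
  · intro n hn
    have h1 : (0:ℚ) ≤ (n:ℚ) := Nat.cast_nonneg n
    have := hpp (n:ℚ) h1
    positivity
  · intro n hn
    obtain ⟨k, rfl⟩ := Nat.exists_eq_add_of_le hn
    simpa [Nat.add_comm] using (hv k).2
end
end

section
/- The sequences u_n and v_n grow with exponential rate ((1+√5)/2)^5, that is, lim_{n→∞} u_n^{1/n} = lim_{n→∞} v_n^{1/n} = ((1+√5)/2)^5. -/
open Filter Topology

noncomputable section

/- ================= auxiliary machinery ================= -/

def pR (x : ℝ) : ℝ := 20*x^2 - 8*x + 1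
def qR (x : ℝ) : ℝ := 3520*x^6 + 5632*x^5 + 2064*x^4 - 384*x^3 - 156*x^2 + 16*x + 7
def AA (n : ℕ) : ℝ := qR ((n:ℝ)+1) / ((2*(n:ℝ)+3)^2 * (2*(n:ℝ)+4)^2 * pR ((n:ℝ)+1))
def BB (n : ℕ) : ℝ := ((2*(n:ℝ)+1)^2 * (2*(n:ℝ)+2)^2 * pR ((n:ℝ)+2))
    / ((2*(n:ℝ)+3)^2 * (2*(n:ℝ)+4)^2 * pR ((n:ℝ)+1))

lemma pp_pos (x : ℚ) : 0 < pp x := by unfold pp; nlinarith [sq_nonneg (10*x - 2)]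
lemma pR_pos (x : ℝ) : 0 < pR x := by unfold pR; nlinarith [sq_nonneg (10*x - 2)]

lemma qq_pos {x : ℚ} (hx : 1 ≤ x) : 0 < qq x := by
  have hx0 : (0:ℚ) < x := by linarith
  have h3 : x^3 ≤ x^6 := pow_le_pow_right₀ hx (by norm_num)
  have h2 : x^2 ≤ x^6 := pow_le_pow_right₀ hx (by norm_num)
  have h5 : (0:ℚ) ≤ x^5 := by positivity
  have h4 : (0:ℚ) ≤ x^4 := by positivity
  unfold qq; nlinarith

lemma uSeq_rec (n : ℕ) : uSeq (n+2) =
      (qq ((n : ℚ) + 1) * uSeq (n + 1)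
          + (2*(n : ℚ)+1)^2 * (2*(n : ℚ)+2)^2 * pp ((n : ℚ) + 2) * uSeq n)
        / ((2*(n : ℚ)+3)^2 * (2*(n : ℚ)+4)^2 * pp ((n : ℚ) + 1)) := rfl

lemma vSeq_rec (n : ℕ) : vSeq (n+2) =
      (qq ((n : ℚ) + 1) * vSeq (n + 1)
          + (2*(n : ℚ)+1)^2 * (2*(n : ℚ)+2)^2 * pp ((n : ℚ) + 2) * vSeq n)
        / ((2*(n : ℚ)+3)^2 * (2*(n : ℚ)+4)^2 * pp ((n : ℚ) + 1)) := rfl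

lemma uSeq_pos : ∀ n, 0 < uSeq n := by
  have key : ∀ n, 0 < uSeq n ∧ 0 < uSeq (n+1) := by
    intro n
    induction n with
    | zero => constructor <;> norm_num [uSeq]
    | succ n ih =>
      refine ⟨ih.2, ?_⟩
      rw [uSeq_rec]
      have h1 : (0:ℚ) < qq ((n:ℚ)+1) :=
        qq_pos (by have := Nat.cast_nonneg (α := ℚ) n; linarith)
      have h2 := pp_pos ((n:ℚ)+2)
      have h3 := pp_pos ((n:ℚ)+1)
      have h4 : (0:ℚ) < (2*(n:ℚ)+1)^2 * (2*(n:ℚ)+2)^2 := by positivity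
      have h5 : (0:ℚ) < (2*(n:ℚ)+3)^2 * (2*(n:ℚ)+4)^2 := by positivity
      exact div_pos (by nlinarith [mul_pos h1 ih.2, mul_pos (mul_pos h4 h2) ih.1])
        (mul_pos h5 h3)
  exact fun n => (key n).1

lemma vSeq_pos : ∀ n, 0 < vSeq (n+1) := by
  have key : ∀ n, 0 ≤ vSeq n ∧ 0 < vSeq (n+1) := by
    intro n
    induction n with
    | zero => constructor <;> norm_num [vSeq]
    | succ n ih =>
      refine ⟨ih.2.le, ?_⟩
      rw [vSeq_rec]
      have h1 : (0:ℚ) < qq ((n:ℚ)+1) :=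
        qq_pos (by have := Nat.cast_nonneg (α := ℚ) n; linarith)
      have h2 := pp_pos ((n:ℚ)+2)
      have h3 := pp_pos ((n:ℚ)+1)
      have h4 : (0:ℚ) < (2*(n:ℚ)+1)^2 * (2*(n:ℚ)+2)^2 := by positivity
      have h5 : (0:ℚ) < (2*(n:ℚ)+3)^2 * (2*(n:ℚ)+4)^2 := by positivity
      refine div_pos ?_ (mul_pos h5 h3)
      have hq : 0 < qq ((n:ℚ)+1) * vSeq (n+1) := mul_pos h1 ih.2
      nlinarith [mul_nonneg (mul_nonneg h4.le h2.le) ih.1]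
  exact fun n => (key n).2

/- limits of the coefficient sequences -/

def g1 (t : ℝ) : ℝ := 3520*(1+t)^6 + 5632*t*(1+t)^5 + 2064*t^2*(1+t)^4 - 384*t^3*(1+t)^3
    - 156*t^4*(1+t)^2 + 16*t^5*(1+t) + 7*t^6
def g2 (t : ℝ) : ℝ := (2+3*t)^2*(2+4*t)^2*(20*(1+t)^2 - 8*t*(1+t) + t^2)
def g3 (t : ℝ) : ℝ := (2+t)^2*(2+2*t)^2*(20*(1+2*t)^2 - 8*t*(1+2*t) + t^2)

lemma tendsto_g (g : ℝ → ℝ) (hg : Continuous g) (h2 : g2 0 ≠ 0) :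
    Tendsto (fun n : ℕ => g (1/(n:ℝ)) / g2 (1/(n:ℝ))) atTop (𝓝 (g 0 / g2 0)) := by
  have hc : ContinuousAt (fun t => g t / g2 t) 0 := by
    have : Continuous g2 := by unfold g2; continuity
    exact hg.continuousAt.div this.continuousAt h2
  exact hc.tendsto.comp tendsto_one_div_atTop_nhds_zero_nat

lemma tendsto_AA : Tendsto AA atTop (𝓝 11) := by
  have h := tendsto_g g1 (by unfold g1; continuity) (by norm_num [g2])
  have heq : g1 0 / g2 0 = 11 := by norm_num [g1, g2]
  rw [heq] at h
  apply h.congr'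
  filter_upwards [eventually_gt_atTop 0] with n hn
  have hn0 : ((n:ℝ)) ≠ 0 := Nat.cast_ne_zero.2 hn.ne'
  have e1 : g1 (1/(n:ℝ)) = qR ((n:ℝ)+1) / (n:ℝ)^6 := by
    unfold g1 qR; field_simp
  have e2 : g2 (1/(n:ℝ)) = ((2*(n:ℝ)+3)^2 * (2*(n:ℝ)+4)^2 * pR ((n:ℝ)+1)) / (n:ℝ)^6 := by
    unfold g2 pR; field_simp
  rw [e1, e2, div_div_div_cancel_right₀ (pow_ne_zero 6 hn0)]
  rfl

lemma tendsto_BB : Tendsto BB atTop (𝓝 1) := by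
  have h := tendsto_g g3 (by unfold g3; continuity) (by norm_num [g2])
  have heq : g3 0 / g2 0 = 1 := by norm_num [g3, g2]
  rw [heq] at h
  apply h.congr'
  filter_upwards [eventually_gt_atTop 0] with n hn
  have hn0 : ((n:ℝ)) ≠ 0 := Nat.cast_ne_zero.2 hn.ne'
  have e1 : g3 (1/(n:ℝ)) = ((2*(n:ℝ)+1)^2 * (2*(n:ℝ)+2)^2 * pR ((n:ℝ)+2)) / (n:ℝ)^6 := by
    unfold g3 pR; field_simp
  have e2 : g2 (1/(n:ℝ)) = ((2*(n:ℝ)+3)^2 * (2*(n:ℝ)+4)^2 * pR ((n:ℝ)+1)) / (n:ℝ)^6 := by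
    unfold g2 pR; field_simp
  rw [e1, e2, div_div_div_cancel_right₀ (pow_ne_zero 6 hn0)]
  rfl

lemma BB_pos (n : ℕ) : 0 < BB n := by
  unfold BB
  have h2 := pR_pos ((n:ℝ)+2)
  have h3 := pR_pos ((n:ℝ)+1)
  have h4 : (0:ℝ) < (2*(n:ℝ)+1)^2 * (2*(n:ℝ)+2)^2 := by positivity
  have h5 : (0:ℝ) < (2*(n:ℝ)+3)^2 * (2*(n:ℝ)+4)^2 := by positivity
  exact div_pos (mul_pos h4 h2) (mul_pos h5 h3)

/- the limit constant -/

def Lc : ℝ := (11 + 5*Real.sqrt 5)/2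

lemma sqrt5_sq : Real.sqrt 5 ^ 2 = 5 := Real.sq_sqrt (by norm_num)
lemma sqrt5_ge : (2:ℝ) ≤ Real.sqrt 5 := by
  nlinarith [sqrt5_sq, Real.sqrt_nonneg 5]
lemma Lc_ge : (10:ℝ) ≤ Lc := by unfold Lc; nlinarith [sqrt5_ge]
lemma Lc_pos : (0:ℝ) < Lc := by linarith [Lc_ge]
lemma Lc_eq : Lc * Lc = 11 * Lc + 1 := by
  unfold Lc; linear_combination (25/4) * sqrt5_sq
lemma Lc_val : ((1 + Real.sqrt 5)/2)^5 = Lc := by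
  unfold Lc
  linear_combination ((Real.sqrt 5^3 + 5*Real.sqrt 5^2 + 15*Real.sqrt 5 + 35)/32) * sqrt5_sq

/- contraction lemma -/

lemma tendsto_zero_of_contract {e δ : ℕ → ℝ} (he0 : ∀ n, 0 ≤ e n)
    (hδ : Tendsto δ atTop (𝓝 0)) (hrec : ∀ᶠ n in atTop, e (n+1) ≤ δ n + e n / 50) :
    Tendsto e atTop (𝓝 0) := by
  rw [Metric.tendsto_atTop]
  intro ε hε
  have hε'0' : (0:ℝ) < ε := hε
  set ε' := ε/3 with hε'
  have hε'0 : 0 < ε' := by positivity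
  have hδ' : ∀ᶠ n in atTop, δ n ≤ 49*ε'/50 := by
    have := hδ.eventually (ge_mem_nhds (show (0:ℝ) < 49*ε'/50 by positivity))
    filter_upwards [this] with n hn using hn
  obtain ⟨N, hN⟩ := (hδ'.and hrec).exists_forall_of_atTop
  have key : ∀ k, e (N + k) ≤ ε' + e N / 50 ^ k := by
    intro k
    induction k with
    | zero => simp; linarith
    | succ k ih =>
      have h1 := (hN (N + k) (by omega)).1
      have h2 := (hN (N + k) (by omega)).2
      have : e (N + k) / 50 ≤ ε'/50 + e N / 50^(k+1) := by
        rw [pow_succ]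
        calc e (N+k)/50 ≤ (ε' + e N / 50^k)/50 := by linarith
          _ = ε'/50 + e N/(50^k * 50) := by ring
      calc e (N + (k+1)) = e ((N+k) + 1) := by ring_nf
        _ ≤ δ (N+k) + e (N+k)/50 := h2
        _ ≤ 49*ε'/50 + (ε'/50 + e N / 50^(k+1)) := by linarith
        _ = ε' + e N / 50^(k+1) := by ring
  obtain ⟨K, hK⟩ := exists_nat_gt (e N / ε')
  have hK0 : 0 < K := by
    by_contra h
    push_neg at h
    interval_cases K
    have := div_nonneg (he0 N) hε'0.le
    linarith
  refine ⟨N + K, fun n hn => ?_⟩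
  have hkk : n = N + (n - N) := by omega
  have hk2 : K ≤ n - N := by omega
  have h2 : e N / 50 ^ (n - N) ≤ e N / K := by
    apply div_le_div_of_nonneg_left (he0 N) (by exact_mod_cast hK0)
    calc (K:ℝ) ≤ 50^K := by
          exact_mod_cast le_of_lt (Nat.lt_pow_self (n := K) (by norm_num : 1 < 50))
      _ ≤ 50^(n-N) := by
          apply pow_le_pow_right₀ (by norm_num) hk2
  have h3 : e N / K < ε' := by
    rw [div_lt_iff₀ (by exact_mod_cast hK0)]
    rw [div_lt_iff₀ hε'0] at hK
    linarith [hK]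
  rw [Real.dist_eq, sub_zero, abs_of_nonneg (he0 n)]
  have hen : e n ≤ ε' + e N / 50^(n-N) := by
    have := key (n - N); rwa [← hkk] at this
  calc e n ≤ ε' + e N / 50^(n-N) := hen
    _ < ε' + ε' := by linarith
    _ < ε := by rw [hε']; linarith

/- ratio convergence -/

lemma ratio_tendsto {x a b : ℕ → ℝ} (hx : ∀ n, 0 < x n) (hb : ∀ n, 0 < b n)
    (hrec : ∀ n, x (n+1) = a n + b n / x n)
    (ha : Tendsto a atTop (𝓝 11)) (hb1 : Tendsto b atTop (𝓝 1)) :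
    Tendsto x atTop (𝓝 Lc) := by
  have hA10 : ∀ᶠ n in atTop, (10:ℝ) ≤ a n :=
    (ha.eventually (lt_mem_nhds (by norm_num : (10:ℝ) < 11))).mono fun n hn => hn.le
  obtain ⟨N0, hN0⟩ := hA10.exists_forall_of_atTop
  have hx10 : ∀ᶠ n in atTop, (10:ℝ) ≤ x n := by
    rw [eventually_atTop]
    refine ⟨N0 + 1, fun n hn => ?_⟩
    obtain ⟨m, rfl⟩ : ∃ m, n = m + 1 := ⟨n - 1, by omega⟩
    rw [hrec m]
    have : 0 < b m / x m := div_pos (hb m) (hx m)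
    have := hN0 m (by omega)
    linarith
  set e := fun n => |x n - Lc| with he
  set δ := fun n => |a n - 11| + |b n - 1| / 10 with hδdef
  have hδ : Tendsto δ atTop (𝓝 0) := by
    have h1 : Tendsto (fun n => |a n - 11|) atTop (𝓝 0) := by
      have := (ha.sub_const 11).abs
      simpa using this
    have h2 : Tendsto (fun n => |b n - 1| / 10) atTop (𝓝 0) := by
      have := ((hb1.sub_const 1).abs).div_const 10
      simpa using this
    simpa using h1.add h2
  have herec : ∀ᶠ n in atTop, e (n+1) ≤ δ n + e n / 50 := by
    filter_upwards [hx10] with n hn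
    have hxn := hx n
    have hxn0 : x n ≠ 0 := hxn.ne'
    have hL0 : Lc ≠ 0 := Lc_pos.ne'
    have hid : x (n+1) - Lc = (a n - 11) + (b n - 1)/(x n) + (Lc - x n)/(x n * Lc) := by
      rw [hrec n]
      field_simp
      linear_combination (-(x n)) * Lc_eq
    have e1 : |(b n - 1)/(x n)| ≤ |b n - 1| / 10 := by
      rw [abs_div, abs_of_pos hxn]
      apply div_le_div_of_nonneg_left (abs_nonneg _) (by norm_num) hn
    have e2 : |(Lc - x n)/(x n * Lc)| ≤ e n / 50 := by
      rw [abs_div, abs_of_pos (mul_pos hxn Lc_pos), abs_sub_comm]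
      apply div_le_div_of_nonneg_left (abs_nonneg _) (by norm_num)
      nlinarith [Lc_ge]
    calc e (n+1) = |x (n+1) - Lc| := rfl
      _ = |(a n - 11) + (b n - 1)/(x n) + (Lc - x n)/(x n * Lc)| := by rw [hid]
      _ ≤ |a n - 11| + |(b n - 1)/(x n)| + |(Lc - x n)/(x n * Lc)| := by
          exact (abs_add_le _ _).trans (by gcongr; exact abs_add_le _ _)
      _ ≤ δ n + e n / 50 := by rw [hδdef]; dsimp only; linarith
  have he0 : ∀ n, 0 ≤ e n := fun n => abs_nonneg _
  have := tendsto_zero_of_contract he0 hδ herec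
  rw [tendsto_iff_dist_tendsto_zero]
  simpa [Real.dist_eq] using this

/- recurrence for ratios, in ℝ -/

lemma ratio_rec {w : ℕ → ℚ}
    (hw : ∀ n : ℕ, w (n+2) = (qq ((n : ℚ) + 1) * w (n + 1)
          + (2*(n : ℚ)+1)^2 * (2*(n : ℚ)+2)^2 * pp ((n : ℚ) + 2) * w n)
        / ((2*(n : ℚ)+3)^2 * (2*(n : ℚ)+4)^2 * pp ((n : ℚ) + 1)))
    (n : ℕ) (h1 : 0 < w n) (h2 : 0 < w (n+1)) :
    ((w (n+2) : ℝ))/((w (n+1) : ℝ)) = AA n + BB n / (((w (n+1) : ℝ))/((w n : ℝ))) := by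
  have hc : (w (n+2) : ℝ) = (qR ((n:ℝ)+1) * (w (n+1) : ℝ)
      + (2*(n:ℝ)+1)^2 * (2*(n:ℝ)+2)^2 * pR ((n:ℝ)+2) * (w n : ℝ))
      / ((2*(n:ℝ)+3)^2 * (2*(n:ℝ)+4)^2 * pR ((n:ℝ)+1)) := by
    have := congrArg (fun q : ℚ => (q : ℝ)) (hw n)
    simp only [pp, qq, pR, qR] at this ⊢
    push_cast at this
    exact this
  have ha : ((w n : ℝ)) ≠ 0 := by exact_mod_cast h1.ne'
  have hb : ((w (n+1) : ℝ)) ≠ 0 := by exact_mod_cast h2.ne'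
  have hn3 : (2*(n:ℝ)+3) ≠ 0 := by positivity
  have hn4 : (2*(n:ℝ)+4) ≠ 0 := by positivity
  have hp1 : pR ((n:ℝ)+1) ≠ 0 := (pR_pos _).ne'
  rw [hc]
  unfold AA BB
  field_simp

/- nth-root limit from ratio limit -/

lemma root_of_ratio {w : ℕ → ℝ} {l : ℝ} (hl : 0 < l) (hw : ∀ n, 0 < w (n+1))
    (hr : Tendsto (fun n => w (n+2)/w (n+1)) atTop (𝓝 l)) :
    Tendsto (fun n : ℕ => w n ^ (1/(n:ℝ))) atTop (𝓝 l) := by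
  set a := fun n => Real.log (w (n+1)) with ha
  have hd : Tendsto (fun n => a (n+1) - a n) atTop (𝓝 (Real.log l)) := by
    have hlog : Tendsto (fun n => Real.log (w (n+2)/w (n+1))) atTop (𝓝 (Real.log l)) :=
      hr.log hl.ne'
    apply hlog.congr
    intro n
    rw [Real.log_div (hw (n+1)).ne' (hw n).ne']
  have hces := hd.cesaro
  have h1 : Tendsto (fun n : ℕ => (n:ℝ)⁻¹ * (a n - a 0)) atTop (𝓝 (Real.log l)) := by
    apply hces.congr; intro n; rw [Finset.sum_range_sub]
  have h2 : Tendsto (fun n : ℕ => (n:ℝ)⁻¹ * a 0) atTop (𝓝 0) := by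
    simpa using (tendsto_inv_atTop_nhds_zero_nat.mul_const (a 0))
  have h3 : Tendsto (fun n : ℕ => (n:ℝ)⁻¹ * a n) atTop (𝓝 (Real.log l)) := by
    have h := h1.add h2
    rw [add_zero] at h
    apply h.congr; intro n; ring
  have h4 : Tendsto (fun n : ℕ => (n:ℝ)/((n:ℝ)+1)) atTop (𝓝 1) :=
    tendsto_natCast_div_add_atTop (1:ℝ)
  have h5 : Tendsto (fun n : ℕ => ((n:ℝ)+1)⁻¹ * a n) atTop (𝓝 (Real.log l)) := by
    have h := h3.mul h4
    rw [mul_one] at h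
    apply h.congr'
    filter_upwards [eventually_ne_atTop 0] with n hn
    have hn0 : ((n:ℝ)) ≠ 0 := Nat.cast_ne_zero.2 hn
    field_simp
  have h6 : Tendsto (fun n : ℕ => (1/(n:ℝ)) * Real.log (w n)) atTop (𝓝 (Real.log l)) := by
    rw [← tendsto_add_atTop_iff_nat 1]
    apply h5.congr
    intro n
    push_cast
    rw [one_div]
  have h7 := (Real.continuous_exp.tendsto _).comp h6
  rw [Real.exp_log hl] at h7
  apply h7.congr'
  filter_upwards [eventually_ge_atTop 1] with n hn
  obtain ⟨m, rfl⟩ : ∃ m, n = m + 1 := ⟨n-1, by omega⟩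
  simp only [Function.comp]
  rw [Real.rpow_def_of_pos (hw m), mul_comm]

/-- `u_n^{1/n} → ((1+√5)/2)⁵` and `v_n^{1/n} → ((1+√5)/2)⁵`. -/
theorem catalan_sequences_growth :
    Tendsto (fun n : ℕ => ((uSeq n : ℝ)) ^ (1 / (n : ℝ))) atTop
      (𝓝 (((1 + Real.sqrt 5) / 2) ^ 5)) ∧
    Tendsto (fun n : ℕ => ((vSeq n : ℝ)) ^ (1 / (n : ℝ))) atTop
      (𝓝 (((1 + Real.sqrt 5) / 2) ^ 5)) := by
  have huR : ∀ n, (0:ℝ) < (uSeq (n+1) : ℝ) := fun n => by exact_mod_cast uSeq_pos (n+1)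
  have hvR : ∀ n, (0:ℝ) < (vSeq (n+1) : ℝ) := fun n => by exact_mod_cast vSeq_pos n
  constructor
  · -- u part
    set x : ℕ → ℝ := fun n => (uSeq (n+1) : ℝ) / (uSeq n : ℝ) with hxdef
    have hxpos : ∀ n, 0 < x n := fun n => div_pos
      (by exact_mod_cast uSeq_pos (n+1)) (by exact_mod_cast uSeq_pos n)
    have hrec : ∀ n, x (n+1) = AA n + BB n / x n :=
      fun n => ratio_rec uSeq_rec n (uSeq_pos n) (uSeq_pos (n+1))
    have htx : Tendsto x atTop (𝓝 Lc) :=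
      ratio_tendsto hxpos BB_pos hrec tendsto_AA tendsto_BB
    have hr : Tendsto (fun n : ℕ => ((uSeq (n+2):ℝ))/((uSeq (n+1):ℝ))) atTop (𝓝 Lc) := by
      have := htx.comp (tendsto_add_atTop_nat 1)
      exact this.congr fun n => rfl
    rw [Lc_val]
    exact root_of_ratio Lc_pos huR hr
  · -- v part
    set x : ℕ → ℝ := fun n => (vSeq (n+2) : ℝ) / (vSeq (n+1) : ℝ) with hxdef
    have hxpos : ∀ n, 0 < x n := fun n => div_pos (hvR (n+1)) (hvR n)
    have hrec : ∀ n, x (n+1) = AA (n+1) + BB (n+1) / x n :=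
      fun n => ratio_rec vSeq_rec (n+1) (vSeq_pos n) (vSeq_pos (n+1))
    have htx : Tendsto x atTop (𝓝 Lc) :=
      ratio_tendsto hxpos (fun n => BB_pos (n+1)) hrec
        (tendsto_AA.comp (tendsto_add_atTop_nat 1))
        (tendsto_BB.comp (tendsto_add_atTop_nat 1))
    rw [Lc_val]
    exact root_of_ratio Lc_pos hvR htx
end
end
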